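/- Let k ≥ 2, ε > 0, f₀(z) = z, and let f : [-ε,ε] → ℝ be of class C^k with ‖f - f₀‖_{C^k} < η where 0 < η ≤ 1/((k+1)·2^{k+3}). Then for every integer j with 1 ≤ j ≤ 2k (assuming the iterates stay in the domain), ‖f^j - f₀‖_{C^k} < 2jη. -/

import Mathlib

open Set Finset

set_option maxHeartbeats 1000000

private lemma abs_iD_eq_norm {n : ℕ} {f : ℝ → ℝ} {s : Set ℝ} {x : ℝ} :
    |iteratedDerivWithin n f s x| = ‖iteratedFDerivWithin ℝ n f s x‖ := by
  rw [norm_iteratedFDerivWithin_eq_norm_iteratedDerivWithin, Real.norm_eq_abs]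

lemma core_bound {k : ℕ} {s : Set ℝ} (hs : UniqueDiffOn ℝ s)
    {φ : ℝ → ℝ} (hφ : ContDiffOn ℝ k φ s) (hmaps : Set.MapsTo φ s s)
    {δ M : ℝ} (hM : 0 ≤ M) (hδ0 : 0 ≤ δ) (hδhalf : ((2:ℝ) ^ k - 1) * δ ≤ 1 / 2)
    (hδ : ∀ m, 1 ≤ m → m ≤ k → ∀ x ∈ s,
      |iteratedDerivWithin m (fun z => φ z - z) s x| ≤ δ) :
    ∀ r, r ≤ k → ∀ g : ℝ → ℝ, ContDiffOn ℝ r g s →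
      (∀ i, i ≤ r → ∀ x ∈ s, |iteratedDerivWithin i g s x| ≤ M) →
      ∀ x ∈ s, |iteratedDerivWithin r (fun z => g (φ z)) s x| ≤
        M / (1 - ((2:ℝ) ^ r - 1) * δ) := by
  have hDpos : ∀ r : ℕ, r ≤ k → (0:ℝ) < 1 - ((2:ℝ) ^ r - 1) * δ := by
    intro r hr
    have h2 : (2:ℝ) ^ r ≤ 2 ^ k := pow_le_pow_right₀ (by norm_num) hr
    nlinarith
  intro r
  induction r using Nat.strong_induction_on with
  | _ r IH =>
    obtain _ | m := r
    · intro _ g hg hb x hx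
      simpa using hb 0 le_rfl (φ x) (hmaps hx)
    · intro hrk g hg hb x hx
      have hmk : m ≤ k := le_trans (Nat.le_succ m) hrk
      have hφid : ContDiffOn ℝ k (fun z => φ z - z) s := hφ.sub contDiffOn_id
      have hg' : ContDiffOn ℝ m (derivWithin g s) s :=
        hg.derivWithin hs (by exact_mod_cast le_refl (m+1))
      have hw : ContDiffOn ℝ m (derivWithin (fun z => φ z - z) s) s :=
        hφid.derivWithin hs (by exact_mod_cast hrk)
      have hφm : ContDiffOn ℝ m φ s := hφ.of_le (by exact_mod_cast hmk)
      have hg'φ : ContDiffOn ℝ m (fun z => derivWithin g s (φ z)) s :=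
        hg'.comp hφm hmaps
      have hgd : DifferentiableOn ℝ g s :=
        hg.differentiableOn (by exact_mod_cast (show m+1 ≠ 0 by omega))
      have hφd : DifferentiableOn ℝ φ s :=
        hφ.differentiableOn (by exact_mod_cast (show k ≠ 0 by omega))
      have key : ∀ y ∈ s, derivWithin (fun z => g (φ z)) s y =
          derivWithin g s (φ y) + derivWithin g s (φ y) * derivWithin (fun z => φ z - z) s y := by
        intro y hy
        have h1 : derivWithin (fun z => g (φ z)) s y =
            derivWithin g s (φ y) * derivWithin φ s y := by
          have := derivWithin_comp y (hgd (φ y) (hmaps hy)) (hφd y hy) hmaps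
          exact this
        have h2 : derivWithin (fun z => φ z - z) s y = derivWithin φ s y - 1 := by
          have h := derivWithin_sub (hφd y hy) (differentiableWithinAt_id (𝕜 := ℝ))
          rw [derivWithin_id _ _ (hs y hy)] at h
          exact h
        rw [h1, h2]; ring
      have hb' : ∀ i, i ≤ m → ∀ y ∈ s, |iteratedDerivWithin i (derivWithin g s) s y| ≤ M := by
        intro i hi y hy
        rw [← iteratedDerivWithin_succ']
        exact hb (i+1) (Nat.succ_le_succ hi) y hy
      rw [iteratedDerivWithin_succ',
        iteratedDerivWithin_congr (fun y hy => key y hy) hx]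
      have hsum : (fun y => derivWithin g s (φ y) +
            derivWithin g s (φ y) * derivWithin (fun z => φ z - z) s y) =
          ((fun y => derivWithin g s (φ y)) +
            (fun y => derivWithin g s (φ y) * derivWithin (fun z => φ z - z) s y)) := rfl
      rw [hsum, iteratedDerivWithin_add hx hs (hg'φ x hx) ((hg'φ.mul hw) x hx)]
      have T1 : |iteratedDerivWithin m (fun y => derivWithin g s (φ y)) s x| ≤
          M / (1 - ((2:ℝ) ^ m - 1) * δ) :=
        IH m (Nat.lt_succ_self m) hmk (derivWithin g s) hg' hb' x hx
      have T2 : |iteratedDerivWithin m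
            (fun y => derivWithin g s (φ y) * derivWithin (fun z => φ z - z) s y) s x| ≤
          2 ^ m * (M / (1 - ((2:ℝ) ^ m - 1) * δ) * δ) := by
        rw [abs_iD_eq_norm]
        refine le_trans (norm_iteratedFDerivWithin_mul_le (N := (m : WithTop ℕ∞))
          hg'φ hw hs hx le_rfl) ?_
        have hterm : ∀ i ∈ Finset.range (m+1),
            (m.choose i : ℝ) * ‖iteratedFDerivWithin ℝ i (fun y => derivWithin g s (φ y)) s x‖ *
              ‖iteratedFDerivWithin ℝ (m - i) (derivWithin (fun z => φ z - z) s) s x‖ ≤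
            (m.choose i : ℝ) * (M / (1 - ((2:ℝ) ^ m - 1) * δ) * δ) := by
          intro i hi
          have him : i ≤ m := Nat.lt_succ_iff.mp (Finset.mem_range.mp hi)
          have hA : ‖iteratedFDerivWithin ℝ i (fun y => derivWithin g s (φ y)) s x‖ ≤
              M / (1 - ((2:ℝ) ^ m - 1) * δ) := by
            rw [← abs_iD_eq_norm]
            refine le_trans (IH i (Nat.lt_succ_of_le him) (le_trans him hmk)
              (derivWithin g s) (hg'.of_le (by exact_mod_cast him))
              (fun i' hi' y hy => hb' i' (le_trans hi' him) y hy) x hx) ?_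
            have h2i : (2:ℝ) ^ i ≤ 2 ^ m := pow_le_pow_right₀ (by norm_num) him
            exact div_le_div_of_nonneg_left hM (hDpos m hmk)
              (by nlinarith)
          have hB : ‖iteratedFDerivWithin ℝ (m - i) (derivWithin (fun z => φ z - z) s) s x‖ ≤
              δ := by
            rw [← abs_iD_eq_norm, ← iteratedDerivWithin_succ']
            exact hδ (m - i + 1) (Nat.succ_le_succ (Nat.zero_le _))
              (le_trans (Nat.succ_le_succ (Nat.sub_le m i)) hrk) x hx
          have hApos : (0:ℝ) ≤ M / (1 - ((2:ℝ) ^ m - 1) * δ) :=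
            div_nonneg hM (hDpos m hmk).le
          calc (m.choose i : ℝ) * ‖iteratedFDerivWithin ℝ i (fun y => derivWithin g s (φ y)) s x‖ *
              ‖iteratedFDerivWithin ℝ (m - i) (derivWithin (fun z => φ z - z) s) s x‖
              ≤ (m.choose i : ℝ) * (M / (1 - ((2:ℝ) ^ m - 1) * δ)) * δ := by
                have h0 : (0:ℝ) ≤ (m.choose i : ℝ) := Nat.cast_nonneg _
                have := mul_le_mul (mul_le_mul_of_nonneg_left hA h0) hB
                  (norm_nonneg _) (by positivity)
                exact this
            _ = (m.choose i : ℝ) * (M / (1 - ((2:ℝ) ^ m - 1) * δ) * δ) := by ring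
        refine le_trans (Finset.sum_le_sum hterm) ?_
        rw [← Finset.sum_mul]
        have hchoose : (∑ i ∈ Finset.range (m+1), (m.choose i : ℝ)) = 2 ^ m := by
          rw [← Nat.cast_sum, Nat.sum_range_choose]; push_cast; ring
        rw [hchoose]
      refine le_trans (abs_add_le _ _) (le_trans (add_le_add T1 T2) ?_)
      have hDm := hDpos m hmk
      have hDm1 := hDpos (m+1) hrk
      set a := (2:ℝ) ^ m with ha_def
      have ha1 : (1:ℝ) ≤ a := one_le_pow₀ (by norm_num)
      have hpow : (2:ℝ) ^ (m+1) = 2 * a := by rw [ha_def, pow_succ]; ring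
      rw [hpow] at hDm1 ⊢
      have hrw : M / (1-(a-1)*δ) + a*(M/(1-(a-1)*δ)*δ) = (M*(1+a*δ))/(1-(a-1)*δ) := by
        field_simp
      rw [hrw, div_le_div_iff₀ hDm hDm1]
      nlinarith [mul_nonneg hM (mul_nonneg hδ0 hδ0), ha1,
        mul_nonneg (mul_nonneg hM hδ0) hδ0,
        mul_nonneg (mul_nonneg (mul_nonneg hM hδ0) hδ0) (le_trans zero_le_one ha1),
        sq_nonneg (a-1)]

theorem stmt11 (k : ℕ) (hk : 2 ≤ k) (ε η : ℝ) (hε : 0 < ε)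
    (hη0 : 0 < η) (hη : η ≤ 1 / (((k : ℝ) + 1) * 2 ^ (k + 3)))
    (f : ℝ → ℝ) (hf : ContDiffOn ℝ k f (Set.Icc (-ε) ε))
    (hmaps : Set.MapsTo f (Set.Icc (-ε) ε) (Set.Icc (-ε) ε))
    (hclose : ∀ r ≤ k, ∀ x ∈ Set.Icc (-ε) ε,
      |iteratedDerivWithin r (fun z => f z - z) (Set.Icc (-ε) ε) x| < η)
    (j : ℕ) (hj1 : 1 ≤ j) (hj2 : j ≤ 2 * k) :
    ∀ r ≤ k, ∀ x ∈ Set.Icc (-ε) ε,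
      |iteratedDerivWithin r (fun z => f^[j] z - z) (Set.Icc (-ε) ε) x| <
        2 * (j : ℝ) * η := by
  set s := Set.Icc (-ε) ε with hs_def
  have hεlt : -ε < ε := by linarith
  have hsu : UniqueDiffOn ℝ s := uniqueDiffOn_Icc hεlt
  have hmapsI : ∀ i : ℕ, Set.MapsTo f^[i] s s := fun i => hmaps.iterate i
  have hsmI : ∀ i : ℕ, ContDiffOn ℝ k f^[i] s := by
    intro i; induction i with
    | zero => simpa using contDiffOn_id
    | succ n ih => rw [Function.iterate_succ']; exact hf.comp ih (hmapsI n)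
  have hK : (2:ℝ) ≤ (k:ℝ) := by exact_mod_cast hk
  set Bm : ℝ := 2 * ((k:ℝ)+1) / ((k:ℝ)+2) with hBm_def
  have hBm0 : 0 ≤ Bm := by rw [hBm_def]; positivity
  have hBmlt : Bm < 2 := by rw [hBm_def, div_lt_iff₀ (by linarith)]; linarith
  have hcd : ContDiffOn ℝ k (fun z => f z - z) s := hf.sub contDiffOn_id
  have ht1 : (1:ℝ) ≤ 2^k := one_le_pow₀ (by norm_num : (1:ℝ) ≤ 2)
  have hηt : η * (((k:ℝ)+1) * ((2:ℝ)^k * 8)) ≤ 1 := by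
    have hpos : (0:ℝ) < ((k:ℝ)+1) * 2^(k+3) := by positivity
    have h := (le_div_iff₀ hpos).mp hη
    have hpow8 : ((2:ℝ))^(k+3) = 2^k * 8 := by rw [pow_add]; norm_num
    rw [hpow8] at h; exact h
  have key : ∀ j : ℕ, j ≤ 2*k → ∀ r ≤ k, ∀ x ∈ s,
      |iteratedDerivWithin r (fun z => f^[j] z - z) s x| ≤ Bm * (j:ℝ) * η := by
    intro j
    induction j with
    | zero =>
      intro _ r hr x hx
      have h0 : (fun z => f^[0] z - z) = (fun _ : ℝ => (0:ℝ)) := by funext z; simp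
      rw [h0, abs_iD_eq_norm, iteratedFDerivWithin_zero_fun, Pi.zero_apply, norm_zero]
      norm_num
    | succ j ih =>
      intro hj2k r hr x hx
      have hj2k' : j ≤ 2*k := le_trans (Nat.le_succ j) hj2k
      have hjR : (j:ℝ) ≤ 2*(k:ℝ) - 1 := by
        have : (j:ℝ) + 1 ≤ 2*(k:ℝ) := by exact_mod_cast hj2k
        linarith
      have hδ0 : (0:ℝ) ≤ Bm * (j:ℝ) * η :=
        mul_nonneg (mul_nonneg hBm0 (Nat.cast_nonneg j)) hη0.le
      have hj0 : (0:ℝ) ≤ (j:ℝ) := Nat.cast_nonneg j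
      have a1 : Bm*((j:ℝ)*η) ≤ 2*((j:ℝ)*η) :=
        mul_le_mul_of_nonneg_right hBmlt.le (mul_nonneg hj0 hη0.le)
      have a2 : (j:ℝ)*η ≤ (2*(k:ℝ)-1)*η := mul_le_mul_of_nonneg_right hjR hη0.le
      have hδle : Bm * (j:ℝ) * η ≤ (4*(k:ℝ)-2) * η := by nlinarith [a1, a2]
      have s1 : ((2:ℝ)^k - 1) * (Bm * (j:ℝ) * η) ≤ (2:ℝ)^k * ((4*(k:ℝ)-2) * η) := by
        have h := mul_le_mul_of_nonneg_left hδle (show (0:ℝ) ≤ (2:ℝ)^k by positivity)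
        nlinarith [hδ0]
      have s2 : 2*((k:ℝ)+1)*((2:ℝ)^k * ((4*(k:ℝ)-2) * η)) ≤ (k:ℝ) := by
        nlinarith [mul_nonneg (show (0:ℝ) ≤ 4*(k:ℝ)-2 by linarith) (sub_nonneg.mpr hηt)]
      have h2 : 2*((k:ℝ)+1)*(((2:ℝ)^k - 1) * (Bm * (j:ℝ) * η)) ≤ (k:ℝ) := by
        nlinarith [s1, s2, hK]
      have hδhalf : ((2:ℝ)^k - 1) * (Bm * (j:ℝ) * η) ≤ 1/2 := by
        nlinarith [h2, hK]
      have hcore := core_bound (k := k) hsu (hsmI j) (hmapsI j)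
        (δ := Bm * (j:ℝ) * η) (M := η) hη0.le hδ0 hδhalf
        (fun m _ hmk y hy => ih hj2k' m hmk y hy)
        r hr (fun z => f z - z) (hcd.of_le (by exact_mod_cast hr))
        (fun i hi y hy => (hclose i (le_trans hi hr) y hy).le) x hx
      have hsplit : (fun z => f^[j+1] z - z) =
          ((fun z => f^[j] z - z) + (fun z => f (f^[j] z) - f^[j] z)) := by
        funext z
        simp only [Pi.add_apply, Function.iterate_succ_apply']
        ring
      rw [hsplit, iteratedDerivWithin_add hx hsu
        (show ContDiffWithinAt ℝ r (fun z => f^[j] z - z) s x from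
          ((hsmI j).sub contDiffOn_id).of_le (by exact_mod_cast hr) x hx)
        (show ContDiffWithinAt ℝ r (fun z => f (f^[j] z) - f^[j] z) s x from
          (hcd.comp (hsmI j) (hmapsI j)).of_le (by exact_mod_cast hr) x hx)]
      refine le_trans (abs_add_le _ _) ?_
      have T1 := ih hj2k' r hr x hx
      have h2r : (2:ℝ)^r ≤ 2^k := pow_le_pow_right₀ (by norm_num) hr
      have hDr : ((k:ℝ)+2)/(2*((k:ℝ)+1)) ≤ 1 - ((2:ℝ)^r - 1)*(Bm*(j:ℝ)*η) := by
        rw [div_le_iff₀ (by linarith)]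
        have hmono : ((2:ℝ)^r - 1)*(Bm*(j:ℝ)*η) ≤ ((2:ℝ)^k - 1)*(Bm*(j:ℝ)*η) :=
          mul_le_mul_of_nonneg_right (by linarith) hδ0
        have hmono2 := mul_le_mul_of_nonneg_left hmono (show (0:ℝ) ≤ 2*((k:ℝ)+1) by linarith)
        nlinarith [h2]
      have hDrpos : (0:ℝ) < 1 - ((2:ℝ)^r - 1)*(Bm*(j:ℝ)*η) :=
        lt_of_lt_of_le (by positivity) hDr
      have T2 : |iteratedDerivWithin r (fun z => f (f^[j] z) - f^[j] z) s x| ≤ Bm * η := by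
        refine le_trans hcore ?_
        rw [div_le_iff₀ hDrpos]
        have e1 : Bm * η * (((k:ℝ)+2)/(2*((k:ℝ)+1))) = η := by
          rw [hBm_def]
          field_simp
        calc η = Bm * η * (((k:ℝ)+2)/(2*((k:ℝ)+1))) := e1.symm
          _ ≤ Bm * η * (1 - ((2:ℝ)^r - 1)*(Bm*(j:ℝ)*η)) :=
            mul_le_mul_of_nonneg_left hDr (mul_nonneg hBm0 hη0.le)
      refine le_trans (add_le_add T1 T2) (le_of_eq ?_)
      push_cast
      ring
  refine fun r hr x hx => lt_of_le_of_lt (key j hj2 r hr x hx) ?_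
  have hj1R : (1:ℝ) ≤ (j:ℝ) := by exact_mod_cast hj1
  have hjη : 0 < (j:ℝ)*η := lt_of_lt_of_le hη0 (le_mul_of_one_le_left hη0.le hj1R)
  nlinarith [mul_pos (sub_pos.mpr hBmlt) hjη]
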